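/- arXiv:1303.2956 — 2 statements merged into one kernel-verified Lean document; each statement's English description precedes it below -/
import Mathlib

section
/- Let γ(s,t) be an arclength-parametrized inextensible flow of partially null curves in E⁴₁ with partially null Frenet frame {T, N, B₁, B₂}, curvatures k₁, k₂ (k₃ = 0), flow ∂γ/∂t = β₁T + β₂N + β₃B₁ + β₄B₂ (so ∂β₁/∂s = β₂k₁), and ψ₂ = ⟨∂N/∂t, B₂⟩. Then ∂²β₃/∂s² + ∂(β₂k₂)/∂s + (∂β₂/∂s)k₂ + β₁k₁k₂ − β₄k₂² − ψ₂k₁ = 0. -/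
/-!
Formalization of inextensible flows of partially null / pseudo null curves in
Minkowski space-time `E⁴₁` (ℝ⁴ with signature (-,+,+,+)).
-/

noncomputable section

/-- The Minkowski bilinear form on `ℝ⁴` with signature `(-,+,+,+)`. -/
def mink (v w : Fin 4 → ℝ) : ℝ :=
  -(v 0 * w 0) + v 1 * w 1 + v 2 * w 2 + v 3 * w 3

/-- The Minkowski norm `‖v‖ = √|⟨v,v⟩|`. -/
def mnorm (v : Fin 4 → ℝ) : ℝ := Real.sqrt |mink v v|

section Aux

variable {F : Type*} [NormedAddCommGroup F] [NormedSpace ℝ F]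

lemma aux_sliceS {f : ℝ → ℝ → F} (hf : ContDiff ℝ (⊤ : ℕ∞) (fun p : ℝ × ℝ => f p.1 p.2))
    (t : ℝ) : ContDiff ℝ (⊤ : ℕ∞) (fun x => f x t) := hf.comp (contDiff_id.prodMk contDiff_const)

lemma aux_sliceT {f : ℝ → ℝ → F} (hf : ContDiff ℝ (⊤ : ℕ∞) (fun p : ℝ × ℝ => f p.1 p.2))
    (s : ℝ) : ContDiff ℝ (⊤ : ℕ∞) (fun y => f s y) := hf.comp (contDiff_const.prodMk contDiff_id)

lemma aux_oneLe : ((⊤ : ℕ∞) : WithTop ℕ∞) ≠ 0 := by simp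

lemma aux_twoLe : minSmoothness ℝ 2 ≤ ((⊤ : ℕ∞) : WithTop ℕ∞) := by
  rw [minSmoothness_of_isRCLikeNormedField]; decide

lemma aux_topAdd : ((⊤ : ℕ∞) : WithTop ℕ∞) + 1 = ((⊤ : ℕ∞) : WithTop ℕ∞) := by norm_cast

lemma aux_deriv_smooth {g : ℝ → F} (hg : ContDiff ℝ (⊤ : ℕ∞) g) :
    ContDiff ℝ (⊤ : ℕ∞) (deriv g) := by
  have h : ContDiff ℝ (((⊤ : ℕ∞) : WithTop ℕ∞) + 1) g := by rw [aux_topAdd]; exact hg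
  exact (contDiff_succ_iff_deriv.mp h).2.2

/-- Partial derivative in the first variable as an `fderiv` application. -/
lemma aux_pd1 {h : ℝ × ℝ → F} {a b : ℝ} (hh : DifferentiableAt ℝ h (a, b)) :
    HasDerivAt (fun x => h (x, b)) (fderiv ℝ h (a, b) (1, 0)) a := by
  have hp : HasDerivAt (fun x : ℝ => (x, b)) ((1 : ℝ), (0 : ℝ)) a :=
    (hasDerivAt_id a).prodMk (hasDerivAt_const a b)
  have := HasFDerivAt.comp_hasDerivAt (f := fun x : ℝ => (x, b)) a hh.hasFDerivAt hp
  exact this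

/-- Partial derivative in the second variable as an `fderiv` application. -/
lemma aux_pd2 {h : ℝ × ℝ → F} {a b : ℝ} (hh : DifferentiableAt ℝ h (a, b)) :
    HasDerivAt (fun y => h (a, y)) (fderiv ℝ h (a, b) (0, 1)) b := by
  have hp : HasDerivAt (fun y : ℝ => (a, y)) ((0 : ℝ), (1 : ℝ)) b :=
    (hasDerivAt_const b a).prodMk (hasDerivAt_id b)
  have := HasFDerivAt.comp_hasDerivAt (f := fun y : ℝ => (a, y)) b hh.hasFDerivAt hp
  exact this

/-- Clairaut / Schwarz: mixed partial derivatives commute for smooth functions. -/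
lemma aux_clairaut (f : ℝ → ℝ → F) (hf : ContDiff ℝ (⊤ : ℕ∞) (fun p : ℝ × ℝ => f p.1 p.2))
    (s t : ℝ) :
    deriv (fun x => deriv (fun y => f x y) t) s = deriv (fun y => deriv (fun x => f x y) s) t := by
  set g : ℝ × ℝ → F := fun p => f p.1 p.2 with hgdef
  have hgd : Differentiable ℝ g := hf.differentiable aux_oneLe
  have hF : ContDiff ℝ (⊤ : ℕ∞) (fderiv ℝ g) := hf.fderiv_right (le_of_eq aux_topAdd)
  have hFd : Differentiable ℝ (fderiv ℝ g) := hF.differentiable aux_oneLe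
  have hsymm : IsSymmSndFDerivAt ℝ g (s, t) := hf.contDiffAt.isSymmSndFDerivAt aux_twoLe
  have e1 : (fun x => deriv (fun y => f x y) t) = fun x => fderiv ℝ g (x, t) (0, 1) := by
    funext x
    exact (aux_pd2 (hgd (x, t))).deriv
  have e2 : (fun y => deriv (fun x => f x y) s) = fun y => fderiv ℝ g (s, y) (1, 0) := by
    funext y
    exact (aux_pd1 (hgd (s, y))).deriv
  rw [e1, e2]
  have h1 : HasDerivAt (fun x => fderiv ℝ g (x, t) (0, 1))
      (fderiv ℝ (fderiv ℝ g) (s, t) (1, 0) (0, 1)) s := by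
    have hc : HasDerivAt (fun x => fderiv ℝ g (x, t))
        (fderiv ℝ (fderiv ℝ g) (s, t) (1, 0)) s := aux_pd1 (hFd (s, t))
    have := hc.clm_apply (hasDerivAt_const s ((0 : ℝ), (1 : ℝ)))
    simpa using this
  have h2 : HasDerivAt (fun y => fderiv ℝ g (s, y) (1, 0))
      (fderiv ℝ (fderiv ℝ g) (s, t) (0, 1) (1, 0)) t := by
    have hc : HasDerivAt (fun y => fderiv ℝ g (s, y))
        (fderiv ℝ (fderiv ℝ g) (s, t) (0, 1)) t := aux_pd2 (hFd (s, t))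
    have := hc.clm_apply (hasDerivAt_const t ((1 : ℝ), (0 : ℝ)))
    simpa using this
  rw [h1.deriv, h2.deriv]
  exact hsymm _ _

end Aux

lemma mink_add_left (u v w : Fin 4 → ℝ) : mink (u + v) w = mink u w + mink v w := by
  simp [mink]; ring

lemma mink_smul_left (c : ℝ) (u w : Fin 4 → ℝ) : mink (c • u) w = c * mink u w := by
  simp [mink]; ring

lemma mink_zero_left (w : Fin 4 → ℝ) : mink 0 w = 0 := by simp [mink]

theorem pde_B1_component_partially_null
    (γ T N B₁ B₂ : ℝ → ℝ → (Fin 4 → ℝ))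
    (k₁ k₂ β₁ β₂ β₃ β₄ : ℝ → ℝ → ℝ)
    (ψ₂ : ℝ → ℝ → ℝ)
    (hγsmooth : ContDiff ℝ (⊤ : ℕ∞) (fun p : ℝ × ℝ => γ p.1 p.2))
    (hTsmooth : ContDiff ℝ (⊤ : ℕ∞) (fun p : ℝ × ℝ => T p.1 p.2))
    (hNsmooth : ContDiff ℝ (⊤ : ℕ∞) (fun p : ℝ × ℝ => N p.1 p.2))
    (hB₁smooth : ContDiff ℝ (⊤ : ℕ∞) (fun p : ℝ × ℝ => B₁ p.1 p.2))
    (hB₂smooth : ContDiff ℝ (⊤ : ℕ∞) (fun p : ℝ × ℝ => B₂ p.1 p.2))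
    (hk₁smooth : ContDiff ℝ (⊤ : ℕ∞) (fun p : ℝ × ℝ => k₁ p.1 p.2))
    (hk₂smooth : ContDiff ℝ (⊤ : ℕ∞) (fun p : ℝ × ℝ => k₂ p.1 p.2))
    (hβ₁smooth : ContDiff ℝ (⊤ : ℕ∞) (fun p : ℝ × ℝ => β₁ p.1 p.2))
    (hβ₂smooth : ContDiff ℝ (⊤ : ℕ∞) (fun p : ℝ × ℝ => β₂ p.1 p.2))
    (hβ₃smooth : ContDiff ℝ (⊤ : ℕ∞) (fun p : ℝ × ℝ => β₃ p.1 p.2))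
    (hβ₄smooth : ContDiff ℝ (⊤ : ℕ∞) (fun p : ℝ × ℝ => β₄ p.1 p.2))
    (hTT : ∀ s t : ℝ, mink (T s t) (T s t) = 1)
    (hNN : ∀ s t : ℝ, mink (N s t) (N s t) = 1)
    (hB₁B₁ : ∀ s t : ℝ, mink (B₁ s t) (B₁ s t) = 0)
    (hB₂B₂ : ∀ s t : ℝ, mink (B₂ s t) (B₂ s t) = 0)
    (hB₁B₂ : ∀ s t : ℝ, mink (B₁ s t) (B₂ s t) = 1)
    (hTN : ∀ s t : ℝ, mink (T s t) (N s t) = 0)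
    (hTB₁ : ∀ s t : ℝ, mink (T s t) (B₁ s t) = 0)
    (hTB₂ : ∀ s t : ℝ, mink (T s t) (B₂ s t) = 0)
    (hNB₁ : ∀ s t : ℝ, mink (N s t) (B₁ s t) = 0)
    (hNB₂ : ∀ s t : ℝ, mink (N s t) (B₂ s t) = 0)
    -- arclength parametrization and Frenet equations (k₃ = 0)
    (hT : ∀ s t : ℝ, T s t = deriv (fun x => γ x t) s)
    (hunit : ∀ s t : ℝ, mnorm (deriv (fun x => γ x t) s) = 1)
    (hfr₁ : ∀ s t : ℝ, deriv (fun x => T x t) s = k₁ s t • N s t)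
    (hfr₂ : ∀ s t : ℝ, deriv (fun x => N x t) s = -(k₁ s t) • T s t + k₂ s t • B₁ s t)
    (hfr₃ : ∀ s t : ℝ, deriv (fun x => B₁ x t) s = 0)
    (hfr₄ : ∀ s t : ℝ, deriv (fun x => B₂ x t) s = -(k₂ s t) • N s t)
    (hflow : ∀ s t : ℝ, deriv (fun x => γ s x) t =
      β₁ s t • T s t + β₂ s t • N s t + β₃ s t • B₁ s t + β₄ s t • B₂ s t)
    -- inextensibility: ∂β₁/∂s = β₂k₁
    (hinext : ∀ s t : ℝ, deriv (fun x => β₁ x t) s = β₂ s t * k₁ s t)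
    (hψ₂ : ∀ s t : ℝ, ψ₂ s t = mink (deriv (fun x => N s x) t) (B₂ s t)) :
    ∀ s t : ℝ,
      deriv (fun x => deriv (fun y => β₃ y t) x) s + deriv (fun x => β₂ x t * k₂ x t) s +
      deriv (fun x => β₂ x t) s * k₂ s t + β₁ s t * k₁ s t * k₂ s t -
      β₄ s t * (k₂ s t) ^ 2 - ψ₂ s t * k₁ s t = 0 := by
  intro s t
  -- Frenet frame fields: HasDerivAt for the `s`-slices
  have hTd : ∀ x, HasDerivAt (fun x' => T x' t) (k₁ x t • N x t) x := fun x => by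
    have h := (((aux_sliceS hTsmooth t).differentiable aux_oneLe) x).hasDerivAt
    rwa [hfr₁ x t] at h
  have hNd : ∀ x, HasDerivAt (fun x' => N x' t) (-(k₁ x t) • T x t + k₂ x t • B₁ x t) x :=
    fun x => by
    have h := (((aux_sliceS hNsmooth t).differentiable aux_oneLe) x).hasDerivAt
    rwa [hfr₂ x t] at h
  have hB₁d : ∀ x, HasDerivAt (fun x' => B₁ x' t) (0 : Fin 4 → ℝ) x := fun x => by
    have h := (((aux_sliceS hB₁smooth t).differentiable aux_oneLe) x).hasDerivAt
    rwa [hfr₃ x t] at h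
  have hB₂d : ∀ x, HasDerivAt (fun x' => B₂ x' t) (-(k₂ x t) • N x t) x := fun x => by
    have h := (((aux_sliceS hB₂smooth t).differentiable aux_oneLe) x).hasDerivAt
    rwa [hfr₄ x t] at h
  -- scalar coefficients: HasDerivAt for the `s`-slices
  have hβ₁d : ∀ x, HasDerivAt (fun x' => β₁ x' t) (β₂ x t * k₁ x t) x := fun x => by
    have h := (((aux_sliceS hβ₁smooth t).differentiable aux_oneLe) x).hasDerivAt
    rwa [hinext x t] at h
  have hβ₂d : ∀ x, HasDerivAt (fun x' => β₂ x' t) (deriv (fun x' => β₂ x' t) x) x :=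
    fun x => (((aux_sliceS hβ₂smooth t).differentiable aux_oneLe) x).hasDerivAt
  have hβ₃d : ∀ x, HasDerivAt (fun x' => β₃ x' t) (deriv (fun x' => β₃ x' t) x) x :=
    fun x => (((aux_sliceS hβ₃smooth t).differentiable aux_oneLe) x).hasDerivAt
  have hβ₄d : ∀ x, HasDerivAt (fun x' => β₄ x' t) (deriv (fun x' => β₄ x' t) x) x :=
    fun x => (((aux_sliceS hβ₄smooth t).differentiable aux_oneLe) x).hasDerivAt
  -- Step 1+2 : ∂T/∂t via commuting mixed partials of γ and the flow equation
  have hDtT : ∀ x, deriv (fun y => T x y) t =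
      (β₁ x t * k₁ x t + deriv (fun x' => β₂ x' t) x - β₄ x t * k₂ x t) • N x t
      + (β₂ x t * k₂ x t + deriv (fun x' => β₃ x' t) x) • B₁ x t
      + (deriv (fun x' => β₄ x' t) x) • B₂ x t := by
    intro x
    have e1 : (fun y => T x y) = fun y => deriv (fun z => γ z y) x := funext fun y => hT x y
    rw [e1, ← aux_clairaut γ hγsmooth x t]
    have e2 : (fun z => deriv (fun y => γ z y) t) =
        fun z => β₁ z t • T z t + β₂ z t • N z t + β₃ z t • B₁ z t + β₄ z t • B₂ z t :=
      funext fun z => hflow z t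
    rw [e2]
    have hW : HasDerivAt
        (fun z => β₁ z t • T z t + β₂ z t • N z t + β₃ z t • B₁ z t + β₄ z t • B₂ z t)
        (((β₁ x t • (k₁ x t • N x t) + (β₂ x t * k₁ x t) • T x t)
          + (β₂ x t • (-(k₁ x t) • T x t + k₂ x t • B₁ x t)
              + (deriv (fun x' => β₂ x' t) x) • N x t))
          + (β₃ x t • (0 : Fin 4 → ℝ) + (deriv (fun x' => β₃ x' t) x) • B₁ x t)
          + (β₄ x t • (-(k₂ x t) • N x t) + (deriv (fun x' => β₄ x' t) x) • B₂ x t)) x :=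
      ((((hβ₁d x).smul (hTd x)).add ((hβ₂d x).smul (hNd x))).add
        ((hβ₃d x).smul (hB₁d x))).add ((hβ₄d x).smul (hB₂d x))
    rw [hW.deriv]
    funext i
    simp only [Pi.add_apply, Pi.smul_apply, Pi.zero_apply, Pi.sub_apply, smul_eq_mul, mul_zero,
      neg_mul]
    ring
  -- Step 3 : commute mixed partials of T
  have e3 : (fun x => deriv (fun y => T x y) t) = fun x =>
      (β₁ x t * k₁ x t + deriv (fun x' => β₂ x' t) x - β₄ x t * k₂ x t) • N x t
      + (β₂ x t * k₂ x t + deriv (fun x' => β₃ x' t) x) • B₁ x t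
      + (deriv (fun x' => β₄ x' t) x) • B₂ x t := funext hDtT
  -- differentiability of the scalar coefficient functions
  have dβ₁ : DifferentiableAt ℝ (fun x => β₁ x t) s := (hβ₁d s).differentiableAt
  have dβ₂ : DifferentiableAt ℝ (fun x => β₂ x t) s := (hβ₂d s).differentiableAt
  have dβ₄ : DifferentiableAt ℝ (fun x => β₄ x t) s := (hβ₄d s).differentiableAt
  have dk₁ : DifferentiableAt ℝ (fun x => k₁ x t) s :=
    (((aux_sliceS hk₁smooth t).differentiable aux_oneLe) s)
  have dk₂ : DifferentiableAt ℝ (fun x => k₂ x t) s :=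
    (((aux_sliceS hk₂smooth t).differentiable aux_oneLe) s)
  have hdcβ₂ : DifferentiableAt ℝ (fun x => deriv (fun x' => β₂ x' t) x) s :=
    (((aux_deriv_smooth (aux_sliceS hβ₂smooth t)).differentiable aux_oneLe) s)
  have hdcβ₃ : DifferentiableAt ℝ (fun x => deriv (fun x' => β₃ x' t) x) s :=
    (((aux_deriv_smooth (aux_sliceS hβ₃smooth t)).differentiable aux_oneLe) s)
  have hdcβ₄ : DifferentiableAt ℝ (fun x => deriv (fun x' => β₄ x' t) x) s :=
    (((aux_deriv_smooth (aux_sliceS hβ₄smooth t)).differentiable aux_oneLe) s)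
  have ha : HasDerivAt
      (fun x => β₁ x t * k₁ x t + deriv (fun x' => β₂ x' t) x - β₄ x t * k₂ x t)
      (deriv (fun x => β₁ x t * k₁ x t + deriv (fun x' => β₂ x' t) x - β₄ x t * k₂ x t) s) s :=
    (((dβ₁.mul dk₁).add hdcβ₂).sub (dβ₄.mul dk₂)).hasDerivAt
  have hbb : HasDerivAt
      (fun x => β₂ x t * k₂ x t + deriv (fun x' => β₃ x' t) x)
      (deriv (fun x => β₂ x t * k₂ x t) s + deriv (fun x => deriv (fun x' => β₃ x' t) x) s) s :=
    ((dβ₂.mul dk₂).hasDerivAt).add hdcβ₃.hasDerivAt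
  have hcc : HasDerivAt (fun x => deriv (fun x' => β₄ x' t) x)
      (deriv (fun x => deriv (fun x' => β₄ x' t) x) s) s := hdcβ₄.hasDerivAt
  have hV₂ : HasDerivAt (fun x =>
      (β₁ x t * k₁ x t + deriv (fun x' => β₂ x' t) x - β₄ x t * k₂ x t) • N x t
      + (β₂ x t * k₂ x t + deriv (fun x' => β₃ x' t) x) • B₁ x t
      + (deriv (fun x' => β₄ x' t) x) • B₂ x t) _ s := ((ha.smul (hNd s)).add (hbb.smul (hB₁d s))).add (hcc.smul (hB₂d s))
  -- the other side : ∂/∂t of (k₁ N)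
  have e4 : (fun y => deriv (fun x => T x y) s) = fun y => k₁ s y • N s y :=
    funext fun y => hfr₁ s y
  have hk₁t : HasDerivAt (fun y => k₁ s y) (deriv (fun y => k₁ s y) t) t :=
    (((aux_sliceT hk₁smooth s).differentiable aux_oneLe) t).hasDerivAt
  have hNt : HasDerivAt (fun y => N s y) (deriv (fun y => N s y) t) t :=
    (((aux_sliceT hNsmooth s).differentiable aux_oneLe) t).hasDerivAt
  have hV₃ : HasDerivAt (fun y => k₁ s y • N s y) _ t := hk₁t.smul hNt
  have hcl := aux_clairaut T hTsmooth s t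
  rw [e3, e4, hV₂.deriv, hV₃.deriv] at hcl
  have key := congrArg (fun v => mink v (B₂ s t)) hcl
  simp only [mink_add_left, mink_smul_left, mink_zero_left, hTB₂ s t, hNB₂ s t, hB₁B₂ s t,
    hB₂B₂ s t, mul_zero, mul_one, zero_add, add_zero, mul_neg, neg_zero] at key
  rw [← hψ₂ s t] at key
  linear_combination key
end
end

section
/- Let γ(u,t) be a one-parameter family of smooth pseudo null curves in E⁴₁ with speed v = ‖∂γ/∂u‖, pseudo null Frenet frame {T, N, B₁, B₂} with curvatures k₁ = 1, k₂, k₃, and flow ∂γ/∂t = α₁T + α₂N + α₃B₁ + α₄B₂. Then the speed evolves by ∂v/∂t = ∂α₁/∂u − α₄ v. -/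
/-!
Formalization of inextensible flows of partially null / pseudo null curves in
Minkowski space-time `E⁴₁` (ℝ⁴ with signature (-,+,+,+)).
-/

noncomputable section

section Helpers

variable {E : Type*} [NormedAddCommGroup E] [NormedSpace ℝ E]

lemma partial_fst_hasDerivAt {F : ℝ × ℝ → E} (hF : Differentiable ℝ F) (u t : ℝ) :
    HasDerivAt (fun x => F (x, t)) (fderiv ℝ F (u, t) (1, 0)) u :=
  (hF (u, t)).hasFDerivAt.comp_hasDerivAt u (HasDerivAt.prodMk (hasDerivAt_id u) (hasDerivAt_const u t))

lemma partial_snd_hasDerivAt {F : ℝ × ℝ → E} (hF : Differentiable ℝ F) (u t : ℝ) :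
    HasDerivAt (fun τ => F (u, τ)) (fderiv ℝ F (u, t) (0, 1)) t :=
  (hF (u, t)).hasFDerivAt.comp_hasDerivAt t (HasDerivAt.prodMk (hasDerivAt_const t u) (hasDerivAt_id t))

lemma hasDerivAt_deriv_swap {F : ℝ → ℝ → E}
    (hF : ContDiff ℝ (⊤ : ℕ∞) (fun p : ℝ × ℝ => F p.1 p.2)) (u t : ℝ) :
    HasDerivAt (fun τ => deriv (fun x => F x τ) u)
      (deriv (fun x => deriv (fun τ => F x τ) t) u) t := by
  set G : ℝ × ℝ → E := fun p => F p.1 p.2 with hG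
  have hdiff : Differentiable ℝ G := hF.differentiable (by simp)
  have hf'diff : Differentiable ℝ (fderiv ℝ G) :=
    (hF.fderiv_right (m := (⊤ : ℕ∞)) (by exact_mod_cast le_top)).differentiable (by simp)
  set f'' := fderiv ℝ (fderiv ℝ G) (u, t) with hf''
  have hA : ∀ x τ : ℝ, deriv (fun y => F y τ) x = fderiv ℝ G (x, τ) (1, 0) := fun x τ =>
    (partial_fst_hasDerivAt hdiff x τ).deriv
  have hA' : ∀ x τ : ℝ, deriv (fun σ => F x σ) τ = fderiv ℝ G (x, τ) (0, 1) := fun x τ =>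
    (partial_snd_hasDerivAt hdiff x τ).deriv
  have hB : HasDerivAt (fun τ => fderiv ℝ G (u, τ) ((1 : ℝ), (0 : ℝ))) (f'' (0, 1) (1, 0)) t := by
    have h1 : HasDerivAt (fun τ => fderiv ℝ G (u, τ)) (f'' (0, 1)) t :=
      partial_snd_hasDerivAt hf'diff u t
    have := (ContinuousLinearMap.apply ℝ E ((1 : ℝ), (0 : ℝ))).hasFDerivAt.comp_hasDerivAt t h1
    exact this
  have hB' : HasDerivAt (fun x => fderiv ℝ G (x, t) ((0 : ℝ), (1 : ℝ))) (f'' (1, 0) (0, 1)) u := by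
    have h1 : HasDerivAt (fun x => fderiv ℝ G (x, t)) (f'' (1, 0)) u :=
      partial_fst_hasDerivAt hf'diff u t
    have := (ContinuousLinearMap.apply ℝ E ((0 : ℝ), (1 : ℝ))).hasFDerivAt.comp_hasDerivAt u h1
    exact this
  have hsym : f'' (0, 1) (1, 0) = f'' (1, 0) (0, 1) :=
    second_derivative_symmetric (fun y => (hdiff y).hasFDerivAt) (hf'diff (u, t)).hasFDerivAt _ _
  have hval : deriv (fun x => deriv (fun τ => F x τ) t) u = f'' (0, 1) (1, 0) := by
    rw [show (fun x => deriv (fun τ => F x τ) t) = fun x => fderiv ℝ G (x, t) ((0:ℝ), (1:ℝ))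
      from funext fun x => hA' x t, hB'.deriv, hsym]
  rw [hval, show (fun τ => deriv (fun x => F x τ) u) = fun τ => fderiv ℝ G (u, τ) ((1:ℝ), (0:ℝ))
      from funext fun τ => hA u τ]
  exact hB

lemma slice_differentiable {f : ℝ → ℝ → E}
    (hf : ContDiff ℝ (⊤ : ℕ∞) (fun p : ℝ × ℝ => f p.1 p.2)) (t : ℝ) :
    Differentiable ℝ (fun x => f x t) :=
  (hf.differentiable (by simp)).comp (differentiable_id.prodMk (differentiable_const t))

end Helpers

lemma mink_comm (a b : Fin 4 → ℝ) : mink a b = mink b a := by unfold mink; ring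

lemma mink_add_right (a b c : Fin 4 → ℝ) : mink a (b + c) = mink a b + mink a c := by
  simp only [mink, Pi.add_apply]; ring

lemma mink_sub_right (a b c : Fin 4 → ℝ) : mink a (b - c) = mink a b - mink a c := by
  simp only [mink, Pi.sub_apply]; ring

lemma mink_smul_right (r : ℝ) (a b : Fin 4 → ℝ) : mink a (r • b) = r * mink a b := by
  simp only [mink, Pi.smul_apply, smul_eq_mul]; ring

lemma mink_smul_left_s10 (r : ℝ) (a b : Fin 4 → ℝ) : mink (r • a) b = r * mink a b := by
  simp only [mink, Pi.smul_apply, smul_eq_mul]; ring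

lemma hasDerivAt_pi_apply {f : ℝ → Fin 4 → ℝ} {f' : Fin 4 → ℝ} {t : ℝ} (i : Fin 4)
    (hf : HasDerivAt f f' t) : HasDerivAt (fun τ => f τ i) (f' i) t := by
  have := (ContinuousLinearMap.proj (R := ℝ) (φ := fun _ : Fin 4 => ℝ) i).hasFDerivAt.comp_hasDerivAt
    t hf
  exact this

lemma HasDerivAt.mink {f g : ℝ → Fin 4 → ℝ} {f' g' : Fin 4 → ℝ} {t : ℝ}
    (hf : HasDerivAt f f' t) (hg : HasDerivAt g g' t) :
    HasDerivAt (fun τ => mink (f τ) (g τ)) (mink f' (g t) + mink (f t) g') t := by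
  have hfi : ∀ i, HasDerivAt (fun τ => f τ i) (f' i) t := fun i => hasDerivAt_pi_apply i hf
  have hgi : ∀ i, HasDerivAt (fun τ => g τ i) (g' i) t := fun i => hasDerivAt_pi_apply i hg
  have h := ((((hfi 0).mul (hgi 0)).neg.add ((hfi 1).mul (hgi 1))).add
      ((hfi 2).mul (hgi 2))).add ((hfi 3).mul (hgi 3))
  have hF : (fun τ => _root_.mink (f τ) (g τ)) =
      fun τ => -(f τ 0 * g τ 0) + f τ 1 * g τ 1 + f τ 2 * g τ 2 + f τ 3 * g τ 3 := by
    funext τ; rfl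
  rw [hF]
  convert h using 1
  · rfl
  · rfl
  · rfl
  simp only [_root_.mink]; ring

theorem speed_evolution_pseudo_null
    (γ T N B₁ B₂ : ℝ → ℝ → (Fin 4 → ℝ))
    (v k₁ k₂ k₃ α₁ α₂ α₃ α₄ : ℝ → ℝ → ℝ)
    (hγsmooth : ContDiff ℝ (⊤ : ℕ∞) (fun p : ℝ × ℝ => γ p.1 p.2))
    (hTsmooth : ContDiff ℝ (⊤ : ℕ∞) (fun p : ℝ × ℝ => T p.1 p.2))
    (hNsmooth : ContDiff ℝ (⊤ : ℕ∞) (fun p : ℝ × ℝ => N p.1 p.2))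
    (hB₁smooth : ContDiff ℝ (⊤ : ℕ∞) (fun p : ℝ × ℝ => B₁ p.1 p.2))
    (hB₂smooth : ContDiff ℝ (⊤ : ℕ∞) (fun p : ℝ × ℝ => B₂ p.1 p.2))
    (hk₂smooth : ContDiff ℝ (⊤ : ℕ∞) (fun p : ℝ × ℝ => k₂ p.1 p.2))
    (hk₃smooth : ContDiff ℝ (⊤ : ℕ∞) (fun p : ℝ × ℝ => k₃ p.1 p.2))
    (hα₁smooth : ContDiff ℝ (⊤ : ℕ∞) (fun p : ℝ × ℝ => α₁ p.1 p.2))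
    (hα₂smooth : ContDiff ℝ (⊤ : ℕ∞) (fun p : ℝ × ℝ => α₂ p.1 p.2))
    (hα₃smooth : ContDiff ℝ (⊤ : ℕ∞) (fun p : ℝ × ℝ => α₃ p.1 p.2))
    (hα₄smooth : ContDiff ℝ (⊤ : ℕ∞) (fun p : ℝ × ℝ => α₄ p.1 p.2))
    (hTT : ∀ u t : ℝ, mink (T u t) (T u t) = 1)
    (hB₁B₁ : ∀ u t : ℝ, mink (B₁ u t) (B₁ u t) = 1)
    (hNN : ∀ u t : ℝ, mink (N u t) (N u t) = 0)
    (hB₂B₂ : ∀ u t : ℝ, mink (B₂ u t) (B₂ u t) = 0)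
    (hNB₂ : ∀ u t : ℝ, mink (N u t) (B₂ u t) = 1)
    (hTN : ∀ u t : ℝ, mink (T u t) (N u t) = 0)
    (hTB₁ : ∀ u t : ℝ, mink (T u t) (B₁ u t) = 0)
    (hTB₂ : ∀ u t : ℝ, mink (T u t) (B₂ u t) = 0)
    (hNB₁ : ∀ u t : ℝ, mink (N u t) (B₁ u t) = 0)
    (hB₁B₂ : ∀ u t : ℝ, mink (B₁ u t) (B₂ u t) = 0)
    -- speed, tangent and pseudo null Frenet equations (∂/∂s = (1/v)∂/∂u, k₁ = 1)
    (hk₁ : ∀ u t : ℝ, k₁ u t = 1)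
    (hv : ∀ u t : ℝ, v u t = mnorm (deriv (fun x => γ x t) u))
    (hvpos : ∀ u t : ℝ, 0 < v u t)
    (hT : ∀ u t : ℝ, deriv (fun x => γ x t) u = v u t • T u t)
    (hfr₁ : ∀ u t : ℝ, deriv (fun x => T x t) u = (v u t * k₁ u t) • N u t)
    (hfr₂ : ∀ u t : ℝ, deriv (fun x => N x t) u = (v u t * k₂ u t) • B₁ u t)
    (hfr₃ : ∀ u t : ℝ, deriv (fun x => B₁ x t) u =
      (v u t * k₃ u t) • N u t - (v u t * k₂ u t) • B₂ u t)
    (hfr₄ : ∀ u t : ℝ, deriv (fun x => B₂ x t) u =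
      (v u t * -(k₁ u t)) • T u t - (v u t * k₃ u t) • B₁ u t)
    (hflow : ∀ u t : ℝ, deriv (fun x => γ u x) t =
      α₁ u t • T u t + α₂ u t • N u t + α₃ u t • B₁ u t + α₄ u t • B₂ u t) :
    ∀ u t : ℝ, deriv (fun x => v u x) t =
      deriv (fun x => α₁ x t) u - α₄ u t * v u t := by
  intro u t
  -- slice differentiability
  have hαd : ∀ {f : ℝ → ℝ → ℝ}, ContDiff ℝ (⊤ : ℕ∞) (fun p : ℝ × ℝ => f p.1 p.2) →
      Differentiable ℝ (fun x => f x t) := fun hf =>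
    (hf.differentiable (by simp)).comp (differentiable_id.prodMk (differentiable_const t))
  -- derivatives in u of the frame, as HasDerivAt
  have hTu : HasDerivAt (fun x => T x t) ((v u t * k₁ u t) • N u t) u := by
    have := ((slice_differentiable hTsmooth t) u).hasDerivAt
    rwa [hfr₁ u t] at this
  have hNu : HasDerivAt (fun x => N x t) ((v u t * k₂ u t) • B₁ u t) u := by
    have := ((slice_differentiable hNsmooth t) u).hasDerivAt
    rwa [hfr₂ u t] at this
  have hB₁u : HasDerivAt (fun x => B₁ x t)
      ((v u t * k₃ u t) • N u t - (v u t * k₂ u t) • B₂ u t) u := by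
    have := ((slice_differentiable hB₁smooth t) u).hasDerivAt
    rwa [hfr₃ u t] at this
  have hB₂u : HasDerivAt (fun x => B₂ x t)
      ((v u t * -(k₁ u t)) • T u t - (v u t * k₃ u t) • B₁ u t) u := by
    have := ((slice_differentiable hB₂smooth t) u).hasDerivAt
    rwa [hfr₄ u t] at this
  have hα₁u : HasDerivAt (fun x => α₁ x t) (deriv (fun x => α₁ x t) u) u :=
    ((hαd hα₁smooth) u).hasDerivAt
  have hα₂u : HasDerivAt (fun x => α₂ x t) (deriv (fun x => α₂ x t) u) u :=
    ((hαd hα₂smooth) u).hasDerivAt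
  have hα₃u : HasDerivAt (fun x => α₃ x t) (deriv (fun x => α₃ x t) u) u :=
    ((hαd hα₃smooth) u).hasDerivAt
  have hα₄u : HasDerivAt (fun x => α₄ x t) (deriv (fun x => α₄ x t) u) u :=
    ((hαd hα₄smooth) u).hasDerivAt
  -- derivative in u of the flow vector field
  have hsum := (((hα₁u.smul hTu).add (hα₂u.smul hNu)).add (hα₃u.smul hB₁u)).add (hα₄u.smul hB₂u)
  -- swap mixed partials: t-derivative of γ_u equals u-derivative of the flow
  have hGt : HasDerivAt (fun τ => deriv (fun x => γ x τ) u)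
      (deriv (fun x => deriv (fun τ => γ x τ) t) u) t := hasDerivAt_deriv_swap hγsmooth u t
  rw [show (fun x => deriv (fun τ => γ x τ) t) =
      (fun x => α₁ x t • T x t + α₂ x t • N x t + α₃ x t • B₁ x t + α₄ x t • B₂ x t)
      from funext fun x => hflow x t, HasDerivAt.deriv (f := fun x => α₁ x t • T x t + α₂ x t • N x t + α₃ x t • B₁ x t + α₄ x t • B₂ x t) hsum] at hGt
  set W := (α₁ u t • ((v u t * k₁ u t) • N u t) + deriv (fun x => α₁ x t) u • T u t +
        (α₂ u t • ((v u t * k₂ u t) • B₁ u t) + deriv (fun x => α₂ x t) u • N u t) +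
        (α₃ u t • ((v u t * k₃ u t) • N u t - (v u t * k₂ u t) • B₂ u t) +
          deriv (fun x => α₃ x t) u • B₁ u t) +
        (α₄ u t • ((v u t * -(k₁ u t)) • T u t - (v u t * k₃ u t) • B₁ u t) +
          deriv (fun x => α₄ x t) u • B₂ u t)) with hW
  -- the square of the speed
  have hq : HasDerivAt
      (fun τ => mink (deriv (fun x => γ x τ) u) (deriv (fun x => γ x τ) u))
      (mink W (deriv (fun x => γ x t) u) + mink (deriv (fun x => γ x t) u) W) t :=
    hGt.mink hGt
  have hqself : ∀ τ : ℝ, mink (deriv (fun x => γ x τ) u) (deriv (fun x => γ x τ) u) =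
      v u τ * v u τ := by
    intro τ
    rw [hT u τ, mink_smul_left_s10, mink_smul_right, hTT u τ]
    ring
  have hveq : (fun τ => v u τ) =
      fun τ => Real.sqrt (mink (deriv (fun x => γ x τ) u) (deriv (fun x => γ x τ) u)) := by
    funext τ
    rw [hv u τ, mnorm, hqself τ, abs_of_nonneg (mul_self_nonneg _)]
  have hqpos : 0 < mink (deriv (fun x => γ x t) u) (deriv (fun x => γ x t) u) := by
    rw [hqself t]; exact mul_pos (hvpos u t) (hvpos u t)
  -- differentiate the speed
  have hsqrt := (Real.hasDerivAt_sqrt (ne_of_gt hqpos)).comp t hq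
  have hvd : HasDerivAt (fun τ => v u τ)
      (1 / (2 * Real.sqrt (mink (deriv (fun x => γ x t) u) (deriv (fun x => γ x t) u))) *
        (mink W (deriv (fun x => γ x t) u) + mink (deriv (fun x => γ x t) u) W)) t := by
    rw [hveq]
    exact hsqrt
  -- compute the Minkowski products
  have hmW : mink (deriv (fun x => γ x t) u) W =
      v u t * (deriv (fun x => α₁ x t) u - α₄ u t * v u t) := by
    rw [hT u t, hW]
    simp only [mink_smul_left_s10, mink_add_right, mink_sub_right, mink_smul_right,
      hTT u t, hTN u t, hTB₁ u t, hTB₂ u t, hk₁ u t]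
    ring
  have hmW' : mink W (deriv (fun x => γ x t) u) =
      v u t * (deriv (fun x => α₁ x t) u - α₄ u t * v u t) := by
    rw [mink_comm]; exact hmW
  rw [hvd.deriv, hmW, hmW', hqself t,
    Real.sqrt_mul_self (le_of_lt (hvpos u t))]
  have hvne : v u t ≠ 0 := ne_of_gt (hvpos u t)
  field_simp
  ring
end
end
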